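/- (Gamma-sum identity used to conclude the proof of Theorem 1.) For every integer j ≥ 1 and every real ν > 2, ∑_{k=1}^{j−1} Γ(j) Γ(k + ν/2) / (Γ(k) Γ(j + ν/2)) = 2(j−1)/(2+ν), where Γ is the real Gamma function and the sum is empty (equal to 0) when j = 1. -/

import Mathlib

/-- (Gamma-sum identity used to conclude the proof of Theorem 1.) For every integer
`j ≥ 1` and every real `ν > 2`,
`∑_{k=1}^{j−1} Γ(j) Γ(k + ν/2) / (Γ(k) Γ(j + ν/2)) = 2(j−1)/(2+ν)`,
where `Γ` is the real Gamma function and the sum is empty (equal to `0`) when `j = 1`. -/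
theorem gamma_sum_identity (j : ℕ) (hj : 1 ≤ j) (ν : ℝ) (hν : 2 < ν) :
    ∑ k ∈ Finset.Icc 1 (j - 1),
        Real.Gamma (j : ℝ) * Real.Gamma ((k : ℝ) + ν / 2) /
          (Real.Gamma (k : ℝ) * Real.Gamma ((j : ℝ) + ν / 2))
      = 2 * ((j : ℝ) - 1) / (2 + ν) := by
  induction j, hj using Nat.le_induction with
  | base => simp
  | succ j hj ih =>
    obtain ⟨m, rfl⟩ : ∃ m, j = m + 1 := ⟨j - 1, (Nat.succ_pred_eq_of_pos hj).symm⟩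
    have hm : (0:ℝ) < (m:ℝ) + 1 := by positivity
    have ha : (0:ℝ) < (m:ℝ) + 1 + ν/2 := by positivity
    have hG1 : 0 < Real.Gamma ((m:ℝ)+1) := Real.Gamma_pos_of_pos hm
    have hG2 : 0 < Real.Gamma ((m:ℝ)+1+ν/2) := Real.Gamma_pos_of_pos ha
    have hν0 : (2:ℝ) + ν ≠ 0 := by linarith
    have e1 : Real.Gamma ((m:ℝ)+1+1) = ((m:ℝ)+1) * Real.Gamma ((m:ℝ)+1) :=
      Real.Gamma_add_one (by positivity)
    have e2 : Real.Gamma ((m:ℝ)+1+ν/2+1) = ((m:ℝ)+1+ν/2) * Real.Gamma ((m:ℝ)+1+ν/2) :=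
      Real.Gamma_add_one (by positivity)
    have e2' : Real.Gamma ((m:ℝ)+1+1+ν/2) = ((m:ℝ)+1+ν/2) * Real.Gamma ((m:ℝ)+1+ν/2) := by
      rw [show (m:ℝ)+1+1+ν/2 = (m:ℝ)+1+ν/2+1 by ring, e2]
    simp only [Nat.add_sub_cancel] at ih ⊢
    rw [Finset.sum_Icc_succ_top (Nat.le_add_left 1 m)]
    push_cast
    push_cast at ih
    have key : ∀ k ∈ Finset.Icc 1 m,
        Real.Gamma ((m:ℝ)+1+1) * Real.Gamma ((k:ℝ) + ν/2) /
          (Real.Gamma (k:ℝ) * Real.Gamma ((m:ℝ)+1+1+ν/2))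
        = (((m:ℝ)+1)/((m:ℝ)+1+ν/2)) *
          (Real.Gamma ((m:ℝ)+1) * Real.Gamma ((k:ℝ) + ν/2) /
            (Real.Gamma (k:ℝ) * Real.Gamma ((m:ℝ)+1+ν/2))) := by
      intro k hk
      rw [e1, e2']
      have hk1 : 0 < Real.Gamma (k:ℝ) := by
        apply Real.Gamma_pos_of_pos
        exact_mod_cast (Finset.mem_Icc.mp hk).1
      field_simp
    rw [Finset.sum_congr rfl key, ← Finset.mul_sum, ih, e1, e2']
    field_simp
    ring
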